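/- With f_t(x,y) := (e^{-tx} − e^{-ty})/(t(y−x)) for x ≠ y and f_t(x,x) := e^{-tx}, one has the Fubini identity (1/t) ∫₀ᵗ Z_s Z_{t-s} ds = ∫∫ f_t(x,y) dμ(x) dμ(y), and the bound f_t(x,y) ≤ e^{-t·min(x,y)} for all x, y ≥ 0 and t > 0. -/

import Mathlib

open MeasureTheory Real Set intervalIntegral

/-- Laplace transform of a measure on ℝ. -/
noncomputable def lapZ (μ : Measure ℝ) (t : ℝ) : ℝ := ∫ x, Real.exp (-t * x) ∂μ

/-- The kernel `f_t(x,y)`. -/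
noncomputable def fker (t x y : ℝ) : ℝ :=
  if x = y then Real.exp (-t * x)
  else (Real.exp (-t * x) - Real.exp (-t * y)) / (t * (y - x))

lemma fker_key (t : ℝ) (ht : 0 < t) (x y : ℝ) :
    (∫ s in (0:ℝ)..t, Real.exp (-s * x - (t - s) * y)) = t * fker t x y := by
  by_cases hxy : x = y
  · subst hxy
    have : ∀ s : ℝ, Real.exp (-s * x - (t - s) * x) = Real.exp (-t * x) := by
      intro s; ring_nf
    simp only [this, intervalIntegral.integral_const, smul_eq_mul, sub_zero]
    simp [fker]
  · have hc : y - x ≠ 0 := sub_ne_zero.mpr (Ne.symm hxy)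
    have h1 : ∀ s : ℝ, Real.exp (-s * x - (t - s) * y)
        = Real.exp (-t * y) * Real.exp (s * (y - x)) := by
      intro s; rw [← Real.exp_add]; ring_nf
    simp only [h1]
    rw [intervalIntegral.integral_const_mul, integral_comp_mul_right Real.exp hc,
      integral_exp]
    simp only [fker, if_neg hxy, zero_mul, Real.exp_zero, smul_eq_mul]
    have h2 : Real.exp (-t * y) * Real.exp (t * (y - x)) = Real.exp (-t * x) := by
      rw [← Real.exp_add]; ring_nf
    field_simp
    ring_nf
    ring_nf at h2
    linear_combination h2

lemma fker_cont (t x y : ℝ) : Continuous fun s : ℝ => Real.exp (-s * x - (t - s) * y) := by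
  fun_prop

lemma fker_bound (t : ℝ) (ht : 0 < t) (x y : ℝ) (_hx : 0 ≤ x) (_hy : 0 ≤ y) :
    fker t x y ≤ Real.exp (-t * min x y) := by
  have hkey := fker_key t ht x y
  have hmono : (∫ s in (0:ℝ)..t, Real.exp (-s * x - (t - s) * y))
      ≤ ∫ _s in (0:ℝ)..t, Real.exp (-t * min x y) := by
    apply intervalIntegral.integral_mono_on ht.le
    · exact (fker_cont t x y).intervalIntegrable 0 t
    · exact intervalIntegrable_const
    · intro s hs
      apply Real.exp_le_exp.mpr
      have h1 : 0 ≤ s * (x - min x y) :=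
        mul_nonneg hs.1 (sub_nonneg.mpr (min_le_left x y))
      have h2 : 0 ≤ (t - s) * (y - min x y) :=
        mul_nonneg (sub_nonneg.mpr hs.2) (sub_nonneg.mpr (min_le_right x y))
      nlinarith
  rw [intervalIntegral.integral_const, smul_eq_mul, sub_zero, hkey] at hmono
  exact le_of_mul_le_mul_left hmono ht

theorem stmt_8 (μ : Measure ℝ) [IsProbabilityMeasure μ] (hsupp : μ (Set.Iio 0) = 0) :
    ∀ t : ℝ, 0 < t →
      ((1 / t) * ∫ s in (0:ℝ)..t, lapZ μ s * lapZ μ (t - s)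
          = ∫ x, ∫ y, fker t x y ∂μ ∂μ)
        ∧ ∀ x y : ℝ, 0 ≤ x → 0 ≤ y → fker t x y ≤ Real.exp (-t * min x y) := by
  intro t ht
  refine ⟨?_, fun x y hx hy => fker_bound t ht x y hx hy⟩
  set ρ : Measure ℝ := volume.restrict (Ioc (0:ℝ) t) with hρ
  set ν : Measure (ℝ × ℝ) := μ.prod μ with hν
  have hμae : ∀ᵐ x ∂μ, 0 ≤ x := by
    rw [ae_iff]
    convert hsupp using 2
    ext x; simp [not_le]
  have hνae : ∀ᵐ p ∂ν, 0 ≤ p.1 ∧ 0 ≤ p.2 := by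
    rw [MeasureTheory.Measure.ae_prod_iff_ae_ae (by
      exact (measurableSet_le measurable_const measurable_fst).inter
        (measurableSet_le measurable_const measurable_snd))]
    filter_upwards [hμae] with x hx
    filter_upwards [hμae] with y hy
    exact ⟨hx, hy⟩
  -- integrability of the big kernel
  have hHm : Continuous fun q : ℝ × (ℝ × ℝ) =>
      Real.exp (-q.1 * q.2.1 - (t - q.1) * q.2.2) := by fun_prop
  have hρae : ∀ᵐ s ∂ρ, s ∈ Ioc (0:ℝ) t := ae_restrict_mem measurableSet_Ioc
  have hae : ∀ᵐ q ∂(ρ.prod ν), q.1 ∈ Ioc (0:ℝ) t ∧ (0 ≤ q.2.1 ∧ 0 ≤ q.2.2) := by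
    rw [MeasureTheory.Measure.ae_prod_iff_ae_ae (by
      exact ((measurableSet_Ioc.preimage measurable_fst).inter
        (((measurableSet_le measurable_const (measurable_fst.comp measurable_snd)).inter
          (measurableSet_le measurable_const (measurable_snd.comp measurable_snd))))))]
    filter_upwards [hρae] with s hs
    filter_upwards [hνae] with p hp
    exact ⟨hs, hp⟩
  have hH : Integrable (fun q : ℝ × (ℝ × ℝ) =>
      Real.exp (-q.1 * q.2.1 - (t - q.1) * q.2.2)) (ρ.prod ν) := by
    apply Integrable.mono' (integrable_const (1:ℝ)) hHm.aestronglyMeasurable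
    filter_upwards [hae] with q hq
    rw [Real.norm_of_nonneg (Real.exp_pos _).le]
    apply Real.exp_le_one_iff.mpr
    have h1 : 0 ≤ q.1 * q.2.1 := mul_nonneg hq.1.1.le hq.2.1
    have h2 : 0 ≤ (t - q.1) * q.2.2 := mul_nonneg (sub_nonneg.mpr hq.1.2) hq.2.2
    linarith
  -- step 1: Z_s Z_{t-s} as a double integral
  have step1 : ∀ s : ℝ, lapZ μ s * lapZ μ (t - s)
      = ∫ p, Real.exp (-s * p.1 - (t - s) * p.2) ∂ν := by
    intro s
    rw [hν, show (fun p : ℝ × ℝ => Real.exp (-s * p.1 - (t - s) * p.2))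
      = fun p : ℝ × ℝ => Real.exp (-s * p.1) * Real.exp (-(t - s) * p.2) from
        funext fun p => by rw [← Real.exp_add]; ring_nf]
    rw [MeasureTheory.integral_prod_mul (f := fun x : ℝ => Real.exp (-s * x))
      (g := fun y : ℝ => Real.exp (-(t - s) * y))]
    rfl
  -- step 2: the interval integral as an integral over ρ
  have step2 : (∫ s in (0:ℝ)..t, lapZ μ s * lapZ μ (t - s))
      = ∫ s, (∫ p, Real.exp (-s * p.1 - (t - s) * p.2) ∂ν) ∂ρ := by
    rw [intervalIntegral.integral_of_le ht.le]
    exact setIntegral_congr_fun measurableSet_Ioc fun s _ => step1 s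
  -- step 3: Fubini
  have step3 : (∫ s, (∫ p, Real.exp (-s * p.1 - (t - s) * p.2) ∂ν) ∂ρ)
      = ∫ p, (∫ s, Real.exp (-s * p.1 - (t - s) * p.2) ∂ρ) ∂ν :=
    MeasureTheory.integral_integral_swap hH
  -- step 4: inner integral
  have step4 : ∀ p : ℝ × ℝ, (∫ s, Real.exp (-s * p.1 - (t - s) * p.2) ∂ρ)
      = t * fker t p.1 p.2 := by
    intro p
    rw [← fker_key t ht p.1 p.2, intervalIntegral.integral_of_le ht.le]
  -- integrability of fker on ν
  have hfk : Integrable (fun p : ℝ × ℝ => fker t p.1 p.2) ν := by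
    have h1 : Integrable (fun p : ℝ × ℝ =>
        ∫ s, Real.exp (-s * p.1 - (t - s) * p.2) ∂ρ) ν := by
      have := hH.integral_prod_right
      simpa using this
    have h2 := h1.const_mul (1 / t)
    apply h2.congr
    filter_upwards with p
    rw [step4 p]
    field_simp
  calc (1 / t) * ∫ s in (0:ℝ)..t, lapZ μ s * lapZ μ (t - s)
      = (1 / t) * ∫ p, (∫ s, Real.exp (-s * p.1 - (t - s) * p.2) ∂ρ) ∂ν := by
        rw [step2, step3]
    _ = (1 / t) * ∫ p, t * fker t p.1 p.2 ∂ν := by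
        congr 1; exact integral_congr_ae (Filter.Eventually.of_forall step4)
    _ = ∫ p, fker t p.1 p.2 ∂ν := by
        rw [MeasureTheory.integral_const_mul]
        field_simp
    _ = ∫ x, ∫ y, fker t x y ∂μ ∂μ := by
        rw [hν, MeasureTheory.integral_prod _ hfk]
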